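/- (Validity of the bootstrap noise distribution.) Let α, β ∈ [0,1], let γ₁, γ₂ satisfy γ₁ > 0, γ₂ > 0, γ₁ + γ₂ < 1, γ₁(1−γ₁−2γ₂) = β − α, and γ₂(1−γ₂) = α(1−β). Let A ∈ {0,1}, let Y be a {0,1}-valued random variable with P(Y=1) = A(1−α−β) + α, let η be independent of Y with P(η=0)=γ₁, P(η=1)=γ₂, P(η=−1)=1−γ₁−γ₂, and set Y† = Y·I(η=0) + I(η=1). Then: (i) (γ₁+γ₂)(1−γ₁−γ₂) = β(1−α); (ii) the conditional variance of Y† given Y satisfies Var(Y† | Y) = Y(β−α) + α(1−β) almost surely; and (iii) E{Var(Y† | Y)} = Var(Y). -/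

import Mathlib

open MeasureTheory ProbabilityTheory

lemma bern_integral {Ω : Type*} [MeasurableSpace Ω] (ν : Measure Ω)
    (X : Ω → ℝ) (hX : Measurable X) (h01 : ∀ ω, X ω = 0 ∨ X ω = 1)
    (q : ℝ) (hq0 : 0 ≤ q) (hq : ν {ω | X ω = 1} = ENNReal.ofReal q) :
    ∫ ω, X ω ∂ν = q := by
  have hsmeas : MeasurableSet {ω | X ω = 1} := hX (measurableSet_singleton 1)
  have hXind : X = Set.indicator {ω | X ω = 1} (fun _ => (1:ℝ)) := by
    funext ω
    rcases h01 ω with h | h <;>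
      simp [Set.indicator_apply, Set.mem_setOf_eq, h]
  calc ∫ ω, X ω ∂ν = ∫ ω, Set.indicator {ω | X ω = 1} (fun _ => (1:ℝ)) ω ∂ν := by
        rw [← hXind]
    _ = (ν {ω | X ω = 1}).toReal := integral_indicator_one hsmeas
    _ = q := by rw [hq, ENNReal.toReal_ofReal hq0]

lemma bern_var {Ω : Type*} [MeasurableSpace Ω] (ν : Measure Ω) [IsProbabilityMeasure ν]
    (X : Ω → ℝ) (hX : Measurable X) (h01 : ∀ ω, X ω = 0 ∨ X ω = 1)
    (q : ℝ) (hq0 : 0 ≤ q) (hq : ν {ω | X ω = 1} = ENNReal.ofReal q) :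
    variance X ν = q - q ^ 2 := by
  have hsmeas : MeasurableSet {ω | X ω = 1} := hX (measurableSet_singleton 1)
  have hXind : X = Set.indicator {ω | X ω = 1} (fun _ => (1:ℝ)) := by
    funext ω
    rcases h01 ω with h | h <;>
      simp [Set.indicator_apply, Set.mem_setOf_eq, h]
  have hmem : MemLp X 2 ν := by
    rw [hXind]
    exact memLp_indicator_const 2 hsmeas (1:ℝ) (Or.inr (measure_ne_top ν _))
  have hsq : X ^ 2 = X := by
    funext ω
    rcases h01 ω with h | h <;> simp [h]
  rw [variance_eq_sub hmem, hsq,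
    bern_integral ν X hX h01 q hq0 hq]

theorem bootstrap_noise_validity
    {Ω : Type*} [MeasurableSpace Ω] (μ : Measure Ω) [IsProbabilityMeasure μ]
    (A : ℝ) (hA : A = 0 ∨ A = 1)
    (α β : ℝ) (hα0 : 0 ≤ α) (hα1 : α ≤ 1) (hβ0 : 0 ≤ β) (hβ1 : β ≤ 1)
    (γ₁ γ₂ : ℝ) (hγ₁ : 0 < γ₁) (hγ₂ : 0 < γ₂) (hγsum : γ₁ + γ₂ < 1)
    (heq1 : γ₁ * (1 - γ₁ - 2 * γ₂) = β - α)
    (heq2 : γ₂ * (1 - γ₂) = α * (1 - β))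
    (Y η : Ω → ℝ) (hYmeas : Measurable Y) (hηmeas : Measurable η)
    (hY01 : ∀ ω, Y ω = 0 ∨ Y ω = 1)
    (hηval : ∀ ω, η ω = -1 ∨ η ω = 0 ∨ η ω = 1)
    (hYdist : μ {ω | Y ω = 1} = ENNReal.ofReal (A * (1 - α - β) + α))
    (hη0 : μ {ω | η ω = 0} = ENNReal.ofReal γ₁)
    (hη1 : μ {ω | η ω = 1} = ENNReal.ofReal γ₂)
    (hηm1 : μ {ω | η ω = -1} = ENNReal.ofReal (1 - γ₁ - γ₂))
    (hindep : IndepFun Y η μ)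
    (Ydag : Ω → ℝ)
    (hYdag : ∀ ω, Ydag ω = Y ω * (if η ω = 0 then 1 else 0) + (if η ω = 1 then 1 else 0)) :
    (γ₁ + γ₂) * (1 - γ₁ - γ₂) = β * (1 - α) ∧
    (∀ y : ℝ, (y = 0 ∨ y = 1) → μ {ω | Y ω = y} ≠ 0 →
      variance Ydag (μ[|{ω | Y ω = y}]) = y * (β - α) + α * (1 - β)) ∧
    ∫ ω, (Y ω * (β - α) + α * (1 - β)) ∂μ = variance Y μ := by
  -- basic facts
  have hp01 : 0 ≤ A * (1 - α - β) + α ∧ A * (1 - α - β) + α ≤ 1 := by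
    rcases hA with h | h <;> subst h <;> constructor <;> nlinarith
  set p := A * (1 - α - β) + α with hp
  have hpvar : p * (β - α) + α * (1 - β) = p - p ^ 2 := by
    rcases hA with h | h <;> rw [hp, h] <;> ring
  have hYdagmeas : Measurable Ydag := by
    have : Ydag = fun ω => Y ω * (if η ω = 0 then 1 else 0) + (if η ω = 1 then 1 else 0) :=
      funext hYdag
    rw [this]
    exact (hYmeas.mul (Measurable.ite (hηmeas (measurableSet_singleton 0))
        measurable_const measurable_const)).add
      (Measurable.ite (hηmeas (measurableSet_singleton 1)) measurable_const measurable_const)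
  have hYdag01 : ∀ ω, Ydag ω = 0 ∨ Ydag ω = 1 := by
    intro ω
    rw [hYdag ω]
    rcases hηval ω with h | h | h <;> rcases hY01 ω with hy | hy <;>
      simp [h, hy] <;> norm_num
  refine ⟨by nlinarith, ?_, ?_⟩
  · -- (ii)
    intro y hy hne
    have hsmeas : MeasurableSet {ω | Y ω = y} := hYmeas (measurableSet_singleton y)
    have : IsProbabilityMeasure (μ[|{ω | Y ω = y}]) :=
      cond_isProbabilityMeasure hne
    -- the set S of η-values making Ydag = 1 on {Y = y}
    set q : ℝ := y * (γ₁ + γ₂) + (1 - y) * γ₂ with hq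
    have hq0 : 0 ≤ q := by
      rcases hy with h | h <;> rw [hq, h] <;> nlinarith
    have hSset : ∃ S : Set ℝ, MeasurableSet S ∧
        ({ω | Y ω = y} ∩ {ω | Ydag ω = 1} = {ω | Y ω = y} ∩ η ⁻¹' S) ∧
        μ (η ⁻¹' S) = ENNReal.ofReal q := by
      rcases hy with h | h
      · refine ⟨{1}, measurableSet_singleton 1, ?_, ?_⟩
        · ext ω
          simp only [Set.mem_inter_iff, Set.mem_setOf_eq, Set.mem_preimage,
            Set.mem_singleton_iff, h]
          constructor
          · rintro ⟨hy0, hd⟩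
            refine ⟨hy0, ?_⟩
            rw [hYdag ω, hy0] at hd
            rcases hηval ω with he | he | he <;> simp [he] at hd ⊢ <;> exact hd
          · rintro ⟨hy0, he⟩
            refine ⟨hy0, ?_⟩
            rw [hYdag ω, hy0, he]
            norm_num
        · have : η ⁻¹' ({1} : Set ℝ) = {ω | η ω = 1} := rfl
          rw [this, hη1, hq, h]; norm_num
      · refine ⟨{0, 1}, (measurableSet_singleton 0).union (measurableSet_singleton 1), ?_, ?_⟩
        · ext ω
          simp only [Set.mem_inter_iff, Set.mem_setOf_eq, Set.mem_preimage,
            Set.mem_insert_iff, Set.mem_singleton_iff, h]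
          constructor
          · rintro ⟨hy1, hd⟩
            refine ⟨hy1, ?_⟩
            rw [hYdag ω, hy1] at hd
            rcases hηval ω with he | he | he <;> simp [he] at hd ⊢ <;> exact hd
          · rintro ⟨hy1, he⟩
            refine ⟨hy1, ?_⟩
            rw [hYdag ω, hy1]
            rcases he with he | he <;> rw [he] <;> norm_num
        · have hdisj : Disjoint (η ⁻¹' ({0} : Set ℝ)) (η ⁻¹' ({1} : Set ℝ)) := by
            rw [Set.disjoint_iff]
            rintro ω ⟨h0, h1⟩
            simp only [Set.mem_preimage, Set.mem_singleton_iff] at h0 h1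
            rw [h0] at h1; norm_num at h1
          have : (η ⁻¹' ({0, 1} : Set ℝ)) = η ⁻¹' {0} ∪ η ⁻¹' {1} := by
            rw [← Set.preimage_union]; rfl
          rw [this, measure_union hdisj (hηmeas (measurableSet_singleton 1))]
          have h0 : η ⁻¹' ({0} : Set ℝ) = {ω | η ω = 0} := rfl
          have h1 : η ⁻¹' ({1} : Set ℝ) = {ω | η ω = 1} := rfl
          rw [h0, h1, hη0, hη1, ← ENNReal.ofReal_add hγ₁.le hγ₂.le, hq, h]
          norm_num
    obtain ⟨S, hSmeas, hSeq, hSμ⟩ := hSset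
    have hcond : (μ[|{ω | Y ω = y}]) {ω | Ydag ω = 1} = ENNReal.ofReal q := by
      rw [cond_apply hsmeas, hSeq]
      have hpre : {ω | Y ω = y} = Y ⁻¹' {y} := rfl
      have hpre2 : μ ({ω | Y ω = y} ∩ η ⁻¹' S) = μ {ω | Y ω = y} * μ (η ⁻¹' S) := by
        rw [hpre]
        exact hindep.measure_inter_preimage_eq_mul {y} S (measurableSet_singleton y) hSmeas
      rw [hpre2, ← mul_assoc, ENNReal.inv_mul_cancel hne (measure_ne_top μ _), one_mul, hSμ]
    have := bern_var (μ[|{ω | Y ω = y}]) Ydag hYdagmeas hYdag01 q hq0 hcond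
    rw [this, hq]
    rcases hy with h | h <;> rw [h] <;> nlinarith
  · -- (iii)
    have hYint : ∫ ω, Y ω ∂μ = p :=
      bern_integral μ Y hYmeas hY01 p hp01.1 hYdist
    have hYvar : variance Y μ = p - p ^ 2 :=
      bern_var μ Y hYmeas hY01 p hp01.1 hYdist
    have hYInteg : Integrable Y μ := by
      have hXind : Y = Set.indicator {ω | Y ω = 1} (fun _ => (1:ℝ)) := by
        funext ω
        rcases hY01 ω with h | h <;>
          simp [Set.indicator_apply, Set.mem_setOf_eq, h]
      rw [hXind]
      exact (integrable_indicator_iff (hYmeas (measurableSet_singleton 1))).2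
        (integrableOn_const (measure_ne_top μ _))
    have : ∫ ω, (Y ω * (β - α) + α * (1 - β)) ∂μ
        = (∫ ω, Y ω ∂μ) * (β - α) + α * (1 - β) := by
      rw [integral_add (hYInteg.mul_const _) (integrable_const _),
        integral_mul_const, integral_const]
      simp
    rw [this, hYint, hYvar, ← hpvar]
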